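/- Almost surely, a Poisson point process on 2-dimensional Minkowski space with positive intensity has no 'nearest point to the origin' in the Lorentzian sense: for every configuration point p in the interior of the future light cone of the origin, there exists another configuration point q in the future light cone with strictly smaller (positive) Lorentzian distance from the origin. -/

import Mathlib

open MeasureTheory Set

lemma lor_region_subset {ε T : ℝ} (hε : 0 < ε) (hε1 : ε ≤ 1) :
    regionBetween (fun x => x - ε / (4 * x)) (fun x => x) (Set.Ico 1 T) ⊆
      {q : ℝ × ℝ | |q.2| < q.1 ∧ q.1 ^ 2 - q.2 ^ 2 < ε} := by
  rintro ⟨x, y⟩ ⟨hx, hy⟩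
  simp only [mem_Ico] at hx
  simp only [mem_Ioo] at hy
  have hx1 : (1:ℝ) ≤ x := hx.1
  have hx0 : 0 < x := lt_of_lt_of_le one_pos hx1
  have hw : ε / (4 * x) ≤ 1 / 4 :=
    div_le_div₀ (by norm_num) hε1 (by norm_num) (by linarith)
  have hwp : 0 < ε / (4 * x) := div_pos hε (by linarith)
  have hy1 : x - 1/4 < y := by linarith [hy.1]
  have hy0 : 0 < y := by linarith
  have h2 : (x - y) * (4 * x) < ε := by
    have := hy.1
    rw [← lt_div_iff₀ (by linarith : (0:ℝ) < 4 * x)]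
    linarith
  constructor
  · rw [abs_of_pos hy0]; exact hy.2
  · nlinarith [hy.2, h2, mul_pos hx0 hx0]

lemma lor_region_volume {ε T : ℝ} (hε : 0 < ε) (hT : 1 ≤ T) :
    volume (regionBetween (fun x => x - ε / (4 * x)) (fun x => x) (Set.Ico 1 T)) =
      ENNReal.ofReal (ε / 4 * Real.log T) := by
  have hfc : ContinuousOn (fun x : ℝ => x - ε / (4 * x)) (Icc 1 T) := by
    apply ContinuousOn.sub continuousOn_id
    apply ContinuousOn.div continuousOn_const (by fun_prop)
    intro x hx
    have : (1:ℝ) ≤ x := hx.1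
    positivity
  have f_int : IntegrableOn (fun x : ℝ => x - ε / (4 * x)) (Ico 1 T) volume :=
    (hfc.integrableOn_Icc).mono_set Ico_subset_Icc_self
  have g_int : IntegrableOn (fun x : ℝ => x) (Ico 1 T) volume :=
    (continuousOn_id.integrableOn_Icc).mono_set Ico_subset_Icc_self
  have hfg : ∀ x ∈ Ico 1 T, x - ε / (4 * x) ≤ x := by
    intro x hx
    have hx1 : (1:ℝ) ≤ x := hx.1
    have : 0 < ε / (4 * x) := div_pos hε (by linarith)
    linarith
  rw [Measure.volume_eq_prod,
    volume_regionBetween_eq_integral f_int g_int measurableSet_Ico hfg]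
  congr 1
  have : ∀ y : ℝ, ((fun x : ℝ => x) - fun x => x - ε / (4 * x)) y = ε / 4 * y⁻¹ := by
    intro y
    show y - (y - ε / (4 * y)) = ε / 4 * y⁻¹
    by_cases hy : y = 0
    · simp [hy]
    · field_simp; ring
  rw [show ((fun x : ℝ => x) - fun x => x - ε / (4 * x)) = fun y => ε / 4 * y⁻¹ from
    funext this]
  rw [integral_Ico_eq_integral_Ioo, ← integral_Ioc_eq_integral_Ioo,
    ← intervalIntegral.integral_of_le hT, intervalIntegral.integral_const_mul,
    integral_inv (by
      intro h
      rw [Set.mem_uIcc] at h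
      rcases h with h | h <;> linarith [h.1, h.2]),
    div_one]

lemma empty_region_null
    [MeasurableSpace (Set (ℝ × ℝ))]
    (ρ : ℝ) (hρ : 0 < ρ)
    (μ : Measure (Set (ℝ × ℝ))) [IsProbabilityMeasure μ]
    (hcount : ∀ A : Set (ℝ × ℝ), MeasurableSet A → volume A < ⊤ → ∀ k : ℕ,
      μ {ω | (ω ∩ A).Finite ∧ (ω ∩ A).ncard = k} =
        ENNReal.ofReal
          ((ρ * (volume A).toReal) ^ k * Real.exp (-(ρ * (volume A).toReal)) / k.factorial))
    {ε : ℝ} (hε : 0 < ε) (hε1 : ε ≤ 1) :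
    μ {ω : Set (ℝ × ℝ) | ∀ q ∈ ω, ¬(|q.2| < q.1 ∧ q.1 ^ 2 - q.2 ^ 2 < ε)} = 0 := by
  set E := {ω : Set (ℝ × ℝ) | ∀ q ∈ ω, ¬(|q.2| < q.1 ∧ q.1 ^ 2 - q.2 ^ 2 < ε)} with hE
  have key : ∀ n : ℕ, μ E ≤ ENNReal.ofReal (Real.exp (-(ρ * (n + 1)))) := by
    intro n
    set T : ℝ := Real.exp (4 * (n + 1) / ε) with hTdef
    have hT : 1 ≤ T := Real.one_le_exp (by positivity)
    set B := regionBetween (fun x : ℝ => x - ε / (4 * x)) (fun x => x) (Set.Ico 1 T) with hB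
    have hBmeas : MeasurableSet B := by
      apply measurableSet_regionBetween _ _ measurableSet_Ico
      · exact measurable_id.sub (measurable_const.div (measurable_const_mul 4))
      · exact measurable_id
    have hvol : volume B = ENNReal.ofReal ((n : ℝ) + 1) := by
      rw [hB, lor_region_volume hε hT, hTdef, Real.log_exp]
      congr 1
      field_simp
    have htoReal : (volume B).toReal = (n : ℝ) + 1 := by
      rw [hvol, ENNReal.toReal_ofReal (by positivity)]
    have hfin : volume B < ⊤ := by rw [hvol]; exact ENNReal.ofReal_lt_top
    have hsub : E ⊆ {ω | (ω ∩ B).Finite ∧ (ω ∩ B).ncard = 0} := by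
      intro ω hω
      have hempty : ω ∩ B = ∅ := by
        ext q
        simp only [Set.mem_inter_iff, Set.mem_empty_iff_false, iff_false, not_and]
        intro hq hqB
        exact hω q hq (lor_region_subset hε hε1 hqB)
      simp only [Set.mem_setOf_eq, hempty]
      exact ⟨Set.finite_empty, by simp⟩
    calc μ E ≤ μ {ω | (ω ∩ B).Finite ∧ (ω ∩ B).ncard = 0} := measure_mono hsub
      _ = ENNReal.ofReal
          ((ρ * (volume B).toReal) ^ 0 * Real.exp (-(ρ * (volume B).toReal)) / Nat.factorial 0) :=
        hcount B hBmeas hfin 0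
      _ = ENNReal.ofReal (Real.exp (-(ρ * (n + 1)))) := by
        rw [htoReal]; norm_num
  have htend : Filter.Tendsto (fun n : ℕ => ENNReal.ofReal (Real.exp (-(ρ * (n + 1)))))
      Filter.atTop (nhds 0) := by
    rw [show (0 : ENNReal) = ENNReal.ofReal 0 by simp]
    apply ENNReal.tendsto_ofReal
    apply Real.tendsto_exp_atBot.comp
    apply Filter.tendsto_neg_atBot_iff.mpr
    have h1 : Filter.Tendsto (fun n : ℕ => (n : ℝ) + 1) Filter.atTop Filter.atTop :=
      Filter.tendsto_atTop_add_const_right _ 1 tendsto_natCast_atTop_atTop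
    exact h1.const_mul_atTop hρ
  exact le_antisymm (ge_of_tendsto' htend key) (zero_le)


/-- a Poisson point process on 2-dimensional Minkowski space with intensity
`ρ > 0` almost surely has no nearest point to the origin in the Lorentzian sense: for every
configuration point `p` strictly inside the future light cone of the origin there is another
configuration point `q` in the cone with strictly smaller Lorentzian distance from the
origin. -/
theorem poisson_process_no_nearest_point
    [MeasurableSpace (Set (ℝ × ℝ))]
    (ρ : ℝ) (hρ : 0 < ρ)
    (μ : Measure (Set (ℝ × ℝ))) [IsProbabilityMeasure μ]
    (hmeas : ∀ (A : Set (ℝ × ℝ)) (k : ℕ), MeasurableSet A →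
      MeasurableSet {ω : Set (ℝ × ℝ) | (ω ∩ A).Finite ∧ (ω ∩ A).ncard = k})
    (hcount : ∀ A : Set (ℝ × ℝ), MeasurableSet A → volume A < ⊤ → ∀ k : ℕ,
      μ {ω | (ω ∩ A).Finite ∧ (ω ∩ A).ncard = k} =
        ENNReal.ofReal
          ((ρ * (volume A).toReal) ^ k * Real.exp (-(ρ * (volume A).toReal)) / k.factorial)) :
    μ {ω | ∀ p ∈ ω, |p.2| < p.1 →
        ∃ q ∈ ω, |q.2| < q.1 ∧ q.1 ^ 2 - q.2 ^ 2 < p.1 ^ 2 - p.2 ^ 2} = 1 := by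
  set S := {ω : Set (ℝ × ℝ) | ∀ p ∈ ω, |p.2| < p.1 →
        ∃ q ∈ ω, |q.2| < q.1 ∧ q.1 ^ 2 - q.2 ^ 2 < p.1 ^ 2 - p.2 ^ 2} with hS
  have hcompl : Sᶜ ⊆ ⋃ (r : ℚ) (_ : 0 < (r:ℝ) ∧ (r:ℝ) ≤ 1),
      {ω : Set (ℝ × ℝ) | ∀ q ∈ ω, ¬(|q.2| < q.1 ∧ q.1 ^ 2 - q.2 ^ 2 < (r:ℝ))} := by
    intro ω hω
    simp only [hS, Set.mem_compl_iff, Set.mem_setOf_eq, not_forall] at hω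
    obtain ⟨p, hp, hpc, hno⟩ := hω
    push_neg at hno
    have hd : 0 < p.1 ^ 2 - p.2 ^ 2 := by
      have h1 : |p.2| ^ 2 = p.2 ^ 2 := sq_abs p.2
      have h2 : 0 ≤ |p.2| := abs_nonneg _
      nlinarith
    obtain ⟨r, hr0, hr1⟩ := exists_rat_btwn (lt_min hd one_pos : (0:ℝ) < min (p.1^2 - p.2^2) 1)
    refine Set.mem_iUnion.mpr ⟨r, Set.mem_iUnion.mpr ⟨⟨hr0, le_of_lt (lt_of_lt_of_le hr1 (min_le_right _ _))⟩, ?_⟩⟩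
    intro q hq ⟨hqc, hqd⟩
    have h3 := hno q hq hqc
    have h4 : (r:ℝ) ≤ p.1 ^ 2 - p.2 ^ 2 := le_of_lt (lt_of_lt_of_le hr1 (min_le_left _ _))
    linarith
  have hnull : μ (⋃ (r : ℚ) (_ : 0 < (r:ℝ) ∧ (r:ℝ) ≤ 1),
      {ω : Set (ℝ × ℝ) | ∀ q ∈ ω, ¬(|q.2| < q.1 ∧ q.1 ^ 2 - q.2 ^ 2 < (r:ℝ))}) = 0 := by
    refine measure_iUnion_null fun r => measure_iUnion_null fun hr => ?_
    exact empty_region_null ρ hρ μ hcount hr.1 hr.2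
  have hSc : μ Sᶜ = 0 := measure_mono_null hcompl hnull
  have h1 : (1 : ENNReal) ≤ μ S := by
    have := measure_union_le (μ := μ) S Sᶜ
    rw [Set.union_compl_self, measure_univ, hSc, add_zero] at this
    exact this
  exact le_antisymm prob_le_one h1
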